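/- Let n ≥ 1, L > 0, μ ≤ 0, and let f : ℝⁿ → ℝ belong to F_{μ,L}. Assume the set X⋆ of global minimizers of f is nonempty, with minimum value f⋆. If f has quadratic gradient growth with constant μ_g > 0 on a set X ⊆ ℝⁿ, then f satisfies the PL inequality with constant μ_p = μ_g²/L on X; that is, f(x) − f⋆ ≤ (L/(2μ_g²))‖∇f(x)‖² for all x ∈ X. -/

import Mathlib

open Set
open scoped RealInnerProductSpace

lemma subgrad_aux {n : ℕ} {g : EuclideanSpace ℝ (Fin n) → ℝ}
    {G : EuclideanSpace ℝ (Fin n) →L[ℝ] ℝ}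
    (hc : ConvexOn ℝ univ g) (x y : EuclideanSpace ℝ (Fin n))
    (hG : HasFDerivAt g G x) : g x + G (y - x) ≤ g y := by
  have hline : HasDerivAt (fun t : ℝ => x + t • (y - x)) (y - x) 0 := by
    simpa using ((hasDerivAt_id (0:ℝ)).smul_const (y - x)).const_add x
  have hφ : HasDerivAt (fun t : ℝ => g (x + t • (y - x))) (G (y - x)) 0 := by
    exact HasFDerivAt.comp_hasDerivAt 0 (by simpa using hG) hline
  have hconv : ConvexOn ℝ univ (fun t : ℝ => g (x + t • (y - x))) := by
    have := hc.comp_affineMap (AffineMap.lineMap x y : ℝ →ᵃ[ℝ] _)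
    simp only [preimage_univ] at this
    convert this using 2 with t
    · rfl
    · rfl
    · rfl
    · rfl
    · simp [AffineMap.lineMap_apply, add_comm]
  have := hconv.le_slope_of_hasDerivAt (mem_univ (0:ℝ)) (mem_univ (1:ℝ))
    one_pos hφ
  simp [slope_def_field] at this
  simp only [map_sub] at *
  linarith

set_option maxHeartbeats 1000000 in
theorem stmt_8 (n : ℕ) (hn : 1 ≤ n)
    (f : EuclideanSpace ℝ (Fin n) → ℝ)
    (f' : EuclideanSpace ℝ (Fin n) → EuclideanSpace ℝ (Fin n))
    (L μ : ℝ) (hL : 0 < L) (hμ : μ ≤ 0)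
    (hgrad : ∀ x, HasGradientAt f (f' x) x)
    (hupper : ConvexOn ℝ univ (fun x => L / 2 * ‖x‖ ^ 2 - f x))
    (hlower : ConvexOn ℝ univ (fun x => f x - μ / 2 * ‖x‖ ^ 2))
    (xs : EuclideanSpace ℝ (Fin n)) (hxs : ∀ z, f xs ≤ f z)
    (X : Set (EuclideanSpace ℝ (Fin n)))
    (μg : ℝ) (hμg : 0 < μg)
    (hQG : ∀ x ∈ X, ∃ xstar ∈ {y | ∀ z, f y ≤ f z},
      ‖x - xstar‖ = Metric.infDist x {y | ∀ z, f y ≤ f z} ∧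
      μg * (Metric.infDist x {y | ∀ z, f y ≤ f z}) ^ 2 ≤ ⟪f' x, x - xstar⟫) :
    ∀ x ∈ X, f x - f xs ≤ L / (2 * μg ^ 2) * ‖f' x‖ ^ 2 := by
  intro x hx
  obtain ⟨xstar, hstar, hdist, hQ⟩ := hQG x hx
  set d := Metric.infDist x {y | ∀ z, f y ≤ f z} with hd
  have hfs : f xstar = f xs := le_antisymm (hstar xs) (hxs xstar)
  -- gradient at the minimizer is zero
  have hmin : IsLocalMin f xstar := Filter.Eventually.of_forall hstar
  have hzero := hmin.hasFDerivAt_eq_zero (hgrad xstar).hasFDerivAt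
  -- fderiv of the smooth gap at xstar
  have hGg : HasFDerivAt (fun x => L / 2 * ‖x‖ ^ 2 - f x)
      (((L/2) • (2 • (innerSL ℝ xstar).comp (ContinuousLinearMap.id ℝ _)))) xstar := by
    have h1 : HasFDerivAt (fun x : EuclideanSpace ℝ (Fin n) => L / 2 * ‖x‖ ^ 2)
        ((L/2) • (2 • (innerSL ℝ xstar).comp (ContinuousLinearMap.id ℝ _))) xstar :=
      ((hasFDerivAt_id xstar).norm_sq).const_mul (L/2)
    simpa [hzero, Pi.sub_def] using h1.sub (hgrad xstar).hasFDerivAt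
  have hsg := subgrad_aux hupper xstar x hGg
  have hkey : f x - f xstar ≤ L / 2 * ‖x - xstar‖ ^ 2 := by
    simp only [ContinuousLinearMap.smul_apply, ContinuousLinearMap.coe_comp',
      Function.comp_apply, ContinuousLinearMap.coe_id', id_eq, nsmul_eq_mul,
      ContinuousLinearMap.smul_apply, innerSL_apply_apply, smul_eq_mul] at hsg
    have hexp : ‖x - xstar‖ ^ 2 = ‖x‖ ^ 2 - 2 * ⟪xstar, x⟫ + ‖xstar‖ ^ 2 := by
      rw [@norm_sub_sq_real]; ring_nf; rw [real_inner_comm]; ring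
    have hin : ⟪xstar, x - xstar⟫ = ⟪xstar, x⟫ - ‖xstar‖ ^ 2 := by
      rw [inner_sub_right, real_inner_self_eq_norm_sq]
    rw [hin] at hsg
    nlinarith [hsg]
  rw [← hdist] at hQ
  have hcs : ⟪f' x, x - xstar⟫ ≤ ‖f' x‖ * ‖x - xstar‖ := real_inner_le_norm _ _
  have hdn : (0:ℝ) ≤ ‖x - xstar‖ := norm_nonneg _
  have h1 : μg * ‖x - xstar‖ ≤ ‖f' x‖ := by
    rcases eq_or_lt_of_le hdn with h0 | h0
    · rw [← h0]; simpa using norm_nonneg (f' x)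
    · nlinarith [hQ.trans hcs]
  have h2 : (μg * ‖x - xstar‖) ^ 2 ≤ ‖f' x‖ ^ 2 :=
    pow_le_pow_left₀ (by positivity) h1 2
  rw [hfs] at hkey
  rw [div_mul_eq_mul_div, le_div_iff₀ (by positivity)]
  nlinarith [mul_le_mul_of_nonneg_left h2 hL.le]
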